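/- For any configuration C ∈ {•,∘}^n, the number of marked plane binary trees \widehat{T} with n+2 leaves whose underlying tree reduces to C equals |R^{-1}{C}| times the number of active bonds of C; equivalently, |(R∘f)^{-1}{C}| = |R^{-1}{C}| · Σ_{C'} W(C → C') when α = β = 1. -/

import Mathlib

/-- Plane binary trees: every internal vertex has exactly two ordered children. -/
inductive PTree where
  | leaf : PTree
  | node : PTree → PTree → PTree
  deriving DecidableEq

namespace PTree

/-- number of leaves (endpoints) -/
def numLeaves : PTree → ℕ
  | leaf => 1
  | node l r => numLeaves l + numLeaves r

/-- directions of the leaves of a subtree which is itself a `b`-child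
(`true` = left child, `false` = right child), in left-to-right order. -/
def dirsAux : PTree → Bool → List Bool
  | leaf, b => [b]
  | node l r, _ => dirsAux l true ++ dirsAux r false

/-- the left/right-child directions of all leaves of a tree, left to right
(`true` = left child, `false` = right child). -/
def dirs : PTree → List Bool
  | leaf => []
  | node l r => dirsAux l true ++ dirsAux r false

/-- The reduction map `R`: the directions of the 2nd through (n+1)-th leaves;
`true` = • (occupied site, left child), `false` = ∘ (empty site, right child). -/
def red (T : PTree) : List Bool := ((dirs T).drop 1).dropLast

/-- number of internal vertices on the path from the leftmost leaf to the root
(root included). -/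
def lCount : PTree → ℕ
  | leaf => 0
  | node l _ => lCount l + 1

/-- number of internal vertices on the path from the rightmost leaf to the root
(root included). -/
def rCount : PTree → ℕ
  | leaf => 0
  | node _ r => rCount r + 1

/-- number of last branching vertices (internal vertices whose two children are leaves). -/
def lbCount : PTree → ℕ
  | leaf => 0
  | node leaf leaf => 1
  | node l r => lbCount l + lbCount r

end PTree

/-- Marked plane binary trees: a plane binary tree with exactly one of its
last branching vertices marked (the constructor `mark` is the marked vertex,
a vertex with two leaf children). -/
inductive MTree where
  | mark : MTree
  | nodeL : MTree → PTree → MTree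
  | nodeR : PTree → MTree → MTree
  deriving DecidableEq

namespace MTree

/-- forgetful map to plane binary trees -/
def forget : MTree → PTree
  | mark => .node .leaf .leaf
  | nodeL l r => .node (forget l) r
  | nodeR l r => .node l (forget r)

/-- collapse the marked vertex (with its two leaf children) to a single leaf. -/
def collapseT : MTree → PTree
  | mark => .leaf
  | nodeL l r => .node (collapseT l) r
  | nodeR l r => .node l (collapseT r)

/-- index (left to right, starting from 0) of the leaf of `collapseT` obtained
by collapsing the marked vertex. -/
def markIdx : MTree → ℕ
  | mark => 0
  | nodeL l _ => markIdx l
  | nodeR l r => l.numLeaves + markIdx r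

end MTree

/-- replace the `i`-th leaf of a tree by a marked last branching vertex. -/
def expand : PTree → ℕ → MTree
  | .leaf, _ => .mark
  | .node l r, i =>
      if i < l.numLeaves then .nodeL (expand l i) r
      else .nodeR l (expand r (i - l.numLeaves))

/-- index of the next right-child (`false`) leaf strictly after position `i`;
if there is none, the index of the rightmost left-child (`true`) leaf. -/
def nextFalseIdx (w : List Bool) (i : ℕ) : ℕ :=
  if (w.drop (i+1)).findIdx (fun b => !b) < (w.drop (i+1)).length
  then i + 1 + (w.drop (i+1)).findIdx (fun b => !b)
  else w.length - 1 - (w.reverse.findIdx (fun b => b))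

/-- index of the closest left-child (`true`) leaf strictly before position `i`;
if there is none, the index of the leftmost right-child (`false`) leaf. -/
def prevTrueIdx (w : List Bool) (i : ℕ) : ℕ :=
  if ((w.take i).reverse).findIdx (fun b => b) < i
  then i - 1 - ((w.take i).reverse).findIdx (fun b => b)
  else w.findIdx (fun b => !b)

/-- position of the leaf where the removed segment is re-glued by `π`. -/
def target (w : List Bool) (i : ℕ) : ℕ :=
  if w.getD i true then prevTrueIdx w i else nextFalseIdx w i

/-- The map `π` on marked trees: remove the segment joining the marked vertex to
its left (resp. right) leaf when the marked vertex is a right (resp. left) child,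
and glue it to the next right- (resp. left-) child leaf to the right (resp. left),
with the boundary rule when no such leaf exists; the new vertex is marked. -/
def piM (M : MTree) : MTree :=
  expand M.collapseT (target M.collapseT.dirs M.markIdx)

open Classical in
/-- Transition rates of the `n`-site open-boundary TASEP, on configurations
encoded as lists of booleans (`true` = •, `false` = ∘). -/
noncomputable def rate (α β : ℝ) (C C' : List Bool) : ℝ :=
  if ∃ A, C = false :: A ∧ C' = true :: A then α
  else if ∃ A, C = A ++ [true] ∧ C' = A ++ [false] then β
  else if ∃ A A', C = A ++ true :: false :: A' ∧ C' = A ++ false :: true :: A' then 1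
  else 0

/-- number of active bonds of a configuration: injection at site 1 if empty,
extraction at site n if occupied, and hops across •∘ pairs. -/
def activeCount (C : List Bool) : ℕ :=
  (if C.head? = some false then 1 else 0) +
  ((C.zip C.tail).count (true, false)) +
  (if C.getLast? = some true then 1 else 0)

/-- the weight `μ(T) = α^{-l(T)} β^{-r(T)}` of a plane binary tree. -/
noncomputable def mu (α β : ℝ) (T : PTree) : ℝ :=
  α ^ (-(T.lCount : ℤ)) * β ^ (-(T.rCount : ℤ))

/-- number of internal vertices on the path from the leftmost leaf to the root,
excluding the marked vertex. -/
def lCountM : MTree → ℕ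
  | .mark => 0
  | .nodeL l _ => lCountM l + 1
  | .nodeR l _ => l.lCount + 1

/-- number of internal vertices on the path from the rightmost leaf to the root,
excluding the marked vertex. -/
def rCountM : MTree → ℕ
  | .mark => 0
  | .nodeR _ r => rCountM r + 1
  | .nodeL _ r => r.rCount + 1

/-- the weight `μ̂` of a marked tree, excluding the marked vertex from the counts. -/
noncomputable def muHat (α β : ℝ) (M : MTree) : ℝ :=
  α ^ (-(lCountM M : ℤ)) * β ^ (-(rCountM M : ℤ))



/- ————— auxiliary machinery ————— -/

-- count of adjacent (true,false) pairs
def adjcnt (l : List Bool) : ℕ := (l.zip l.tail).count (true, false)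

lemma adjcnt_nil : adjcnt [] = 0 := rfl
lemma adjcnt_singleton (a : Bool) : adjcnt [a] = 0 := rfl

lemma adjcnt_cons (a : Bool) (B : List Bool) :
    adjcnt (a :: B) = (if a = true ∧ B.head? = some false then 1 else 0) + adjcnt B := by
  cases B with
  | nil => simp [adjcnt]
  | cons b B' =>
    simp only [adjcnt, List.tail_cons, List.zip_cons_cons, List.count_cons, List.head?_cons]
    cases a <;> cases b <;> simp [Nat.add_comm]

lemma adjcnt_append (A B : List Bool) :
    adjcnt (A ++ B) = adjcnt A + adjcnt B +
      (if A.getLast? = some true ∧ B.head? = some false then 1 else 0) := by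
  induction A with
  | nil => simp [adjcnt_nil]
  | cons a A ih =>
    rw [List.cons_append, adjcnt_cons, ih, adjcnt_cons]
    cases A with
    | nil =>
      simp only [List.nil_append, adjcnt_nil, List.getLast?_singleton, List.head?_nil]
      rcases B with _ | ⟨b, B'⟩ <;> cases a <;> simp <;> ring
    | cons a' A' =>
      have h1 : (a' :: A' ++ B).head? = some a' := rfl
      have h2 : ((a :: a' :: A').getLast? = (a' :: A').getLast?) := by
        simp [List.getLast?_cons_cons]
      simp only [h1, List.head?_cons, h2]
      ac_rfl

namespace PTree

lemma length_dirsAux (T : PTree) (b : Bool) : (dirsAux T b).length = T.numLeaves := by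
  induction T generalizing b with
  | leaf => rfl
  | node l r ihl ihr => simp [dirsAux, numLeaves, ihl, ihr]

lemma numLeaves_pos (T : PTree) : 0 < T.numLeaves := by
  induction T with
  | leaf => simp [numLeaves]
  | node l r ihl ihr => simp [numLeaves]; omega

lemma dirsAux_ne_nil (T : PTree) (b : Bool) : dirsAux T b ≠ [] := by
  apply List.ne_nil_of_length_pos
  rw [length_dirsAux]; exact numLeaves_pos T

lemma dirsAux_head? (T : PTree) (b : Bool) :
    (dirsAux T b).head? = some (match T with | .leaf => b | _ => true) := by
  induction T generalizing b with
  | leaf => rfl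
  | node l r ihl ihr =>
    show (dirsAux l true ++ dirsAux r false).head? = some true
    rw [List.head?_append_of_ne_nil _ (dirsAux_ne_nil l true)]
    rw [ihl]
    cases l <;> rfl

lemma dirsAux_getLast? (T : PTree) (b : Bool) :
    (dirsAux T b).getLast? = some (match T with | .leaf => b | _ => false) := by
  induction T generalizing b with
  | leaf => rfl
  | node l r ihl ihr =>
    show (dirsAux l true ++ dirsAux r false).getLast? = some false
    rw [List.getLast?_append_of_ne_nil _ (dirsAux_ne_nil r false)]
    rw [ihr]
    cases r <;> rfl

lemma adjcnt_dirsAux (T : PTree) (b : Bool) : adjcnt (dirsAux T b) = lbCount T := by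
  induction T generalizing b with
  | leaf => simp [dirsAux, adjcnt_singleton, lbCount]
  | node l r ihl ihr =>
    show adjcnt (dirsAux l true ++ dirsAux r false) = _
    rw [adjcnt_append, ihl, ihr, dirsAux_getLast?, dirsAux_head?]
    cases l <;> cases r <;> simp [lbCount]

lemma dirs_node (l r : PTree) : dirs (node l r) = dirsAux (node l r) true := rfl

lemma lbCount_eq_activeCount (T : PTree) (h : 3 ≤ T.numLeaves) :
    T.lbCount = activeCount T.red := by
  obtain ⟨l, r⟩ := T
  · simp [numLeaves] at h
  case node l r =>
  have hDlen : (dirs (node l r)).length = (node l r).numLeaves := by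
    rw [dirs_node, length_dirsAux]
  have hhead : (dirs (node l r)).head? = some true := by
    rw [dirs_node, dirsAux_head?]
  have hlast : (dirs (node l r)).getLast? = some false := by
    rw [dirs_node, dirsAux_getLast?]
  have hadj : adjcnt (dirs (node l r)) = (node l r).lbCount := by
    rw [dirs_node, adjcnt_dirsAux]
  have hDlen3 : 3 ≤ (dirs (node l r)).length := by rw [hDlen]; exact h
  obtain ⟨d, t, hDt⟩ : ∃ d t, dirs (node l r) = d :: t := by
    rcases hE : dirs (node l r) with _ | ⟨d, t⟩
    · rw [hE] at hDlen3; simp at hDlen3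
    · exact ⟨d, t, rfl⟩
  rw [hDt] at hhead hlast hadj hDlen3
  have hd : d = true := by simpa using hhead
  subst hd
  have htne : t ≠ [] := by
    intro h'; rw [h'] at hDlen3; simp at hDlen3
  have hred : (node l r).red = t.dropLast := by
    simp [red, hDt]
  have hlast' : t.getLast? = some false := by
    rcases t with _ | ⟨u, t'⟩
    · exact absurd rfl htne
    · rw [List.getLast?_cons_cons] at hlast; exact hlast
  have ht : t = t.dropLast ++ [false] := by
    conv_lhs => rw [← List.dropLast_append_getLast htne]
    rw [List.getLast?_eq_getLast htne] at hlast'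
    rw [Option.some_inj.mp hlast']
  have hredne : t.dropLast ≠ [] := by
    apply List.ne_nil_of_length_pos
    have := @List.length_dropLast _ t
    have htl : (true :: t).length = t.length + 1 := rfl
    simp only [List.length_cons] at hDlen3
    omega
  rw [← hadj, hred]
  conv_lhs => rw [ht]
  rw [adjcnt_cons, adjcnt_append]
  have hh : (t.dropLast ++ [false]).head? = t.dropLast.head? := by
    rcases hE : t.dropLast with _ | ⟨x, xs⟩
    · exact absurd hE hredne
    · rfl
  rw [hh]
  simp only [activeCount, adjcnt, List.head?_cons, List.getLast?_singleton,
    adjcnt_singleton]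
  rcases hhd : t.dropLast.head? with _ | b
  · rw [List.head?_eq_none_iff] at hhd
    exact absurd hhd hredne
  · cases b <;> rcases hlt : t.dropLast.getLast? with _ | b' <;>
      first
        | (rw [List.getLast?_eq_none_iff] at hlt; exact absurd hlt hredne)
        | (cases b' <;> simp [hhd, hlt] <;> ring)

end PTree


namespace MTree
lemma forget_ne_leaf (M : MTree) : M.forget ≠ .leaf := by
  cases M <;> simp [forget]

lemma leaf_ne_forget (M : MTree) : PTree.leaf ≠ M.forget := (forget_ne_leaf M).symm
end MTree

open PTree MTree

def markings : PTree → List MTree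
  | .leaf => []
  | .node .leaf .leaf => [.mark]
  | .node l r => ((markings l).map (fun m => .nodeL m r)) ++ ((markings r).map (fun m => .nodeR l m))

lemma mem_markings : ∀ (M : MTree) (T : PTree), M ∈ markings T ↔ M.forget = T := by
  intro M
  induction M with
  | mark =>
    intro T
    obtain _ | ⟨l, r⟩ := T
    · simp [markings, forget]
    · cases l <;> cases r <;> simp [markings, forget]
  | nodeL m r ih =>
    intro T
    obtain _ | ⟨l', r'⟩ := T
    · simp [markings, forget]
    · cases l' <;> cases r' <;>
        (simp [markings, forget, ih, forget_ne_leaf, leaf_ne_forget, eq_comm, and_comm]) <;>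
        (try tauto) <;> aesop
  | nodeR l m ih =>
    intro T
    obtain _ | ⟨l', r'⟩ := T
    · simp [markings, forget]
    · cases l' <;> cases r' <;>
        (simp [markings, forget, ih, forget_ne_leaf, leaf_ne_forget, eq_comm, and_comm]) <;>
        (try tauto) <;> aesop

lemma markings_nodup_aux (l r : PTree) (hl : (markings l).Nodup)
    (hr : (markings r).Nodup) :
    (((markings l).map (fun m => MTree.nodeL m r)) ++
      ((markings r).map (fun m => MTree.nodeR l m))).Nodup := by
  rw [List.nodup_append]
  refine ⟨(hl.map ?_), (hr.map ?_), ?_⟩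
  · intro a b h; simpa using h
  · intro a b h; simpa using h
  · intro x hx y hy h
    simp only [List.mem_map] at hx hy
    obtain ⟨a, -, rfl⟩ := hx
    obtain ⟨b, -, rfl⟩ := hy
    exact MTree.noConfusion h

lemma markings_nodup (T : PTree) : (markings T).Nodup := by
  induction T with
  | leaf => simp [markings]
  | node l r ihl ihr =>
    cases l <;> cases r
    · simp [markings]
    · exact markings_nodup_aux _ _ ihl ihr
    · exact markings_nodup_aux _ _ ihl ihr
    · exact markings_nodup_aux _ _ ihl ihr

lemma markings_length (T : PTree) : (markings T).length = T.lbCount := by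
  induction T with
  | leaf => simp [markings, lbCount]
  | node l r ihl ihr =>
    cases l <;> cases r <;> simp [markings, lbCount, ihl, ihr]

def allTrees : ℕ → List PTree
  | 0 => []
  | 1 => [.leaf]
  | n+2 => (List.range (n+1)).attach.flatMap
      (fun k => (allTrees (k.1+1)).flatMap
        (fun l => (allTrees (n+1-k.1)).map (fun r => .node l r)))
  decreasing_by
  · have := k.2; simp [List.mem_range] at this; omega
  · have := k.2; simp [List.mem_range] at this; omega

lemma mem_allTrees : ∀ (m : ℕ) (T : PTree), T ∈ allTrees m ↔ T.numLeaves = m := by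
  intro m
  induction m using Nat.strong_induction_on with
  | _ m ih =>
  match m with
  | 0 => intro T; simp [allTrees]; have := T.numLeaves_pos; omega
  | 1 =>
    intro T
    simp only [allTrees, List.mem_singleton]
    constructor
    · rintro rfl; rfl
    · intro h
      cases T with
      | leaf => rfl
      | node l r =>
        have := l.numLeaves_pos; have := r.numLeaves_pos
        simp [numLeaves] at h; omega
  | n+2 =>
    intro T
    simp only [allTrees, List.mem_flatMap, List.mem_map, List.mem_attach, true_and,
      Subtype.exists, List.mem_range]
    constructor
    · rintro ⟨k, hk, l, hl, r, hr, rfl⟩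
      rw [ih (k+1) (by omega) l] at hl
      rw [ih (n+1-k) (by omega) r] at hr
      simp [numLeaves, hl, hr]; omega
    · intro h
      cases T with
      | leaf => simp [numLeaves] at h
      | node l r =>
        have hl := l.numLeaves_pos; have hr := r.numLeaves_pos
        simp only [numLeaves] at h
        refine ⟨l.numLeaves - 1, by omega, l, ?_, r, ?_, rfl⟩
        · rw [ih (l.numLeaves - 1 + 1) (by omega)]; omega
        · rw [ih (n+1-(l.numLeaves-1)) (by omega)]; omega


attribute [local instance 0] Classical.propDecidable

def c1 (w u : List Bool) : Prop := ∃ A, w = false :: A ∧ u = true :: A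
def c2 (w u : List Bool) : Prop := ∃ A, w = A ++ [true] ∧ u = A ++ [false]
def c3 (w u : List Bool) : Prop :=
  ∃ A A', w = A ++ true :: false :: A' ∧ u = A ++ false :: true :: A'

lemma not_c1_c2 (w u : List Bool) : c1 w u → c2 w u → False := by
  rintro ⟨A, rfl, rfl⟩ ⟨B, hB, hB'⟩
  cases B with
  | nil => simp at hB
  | cons b B' =>
    rw [List.cons_append] at hB hB'
    rw [List.cons_eq_cons] at hB hB'
    rw [← hB.1] at hB'
    exact Bool.noConfusion hB'.1

lemma not_c1_c3 (w u : List Bool) : c1 w u → c3 w u → False := by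
  rintro ⟨A, rfl, rfl⟩ ⟨B, B', hB, hB'⟩
  cases B with
  | nil => simp at hB
  | cons b B'' =>
    rw [List.cons_append] at hB hB'
    rw [List.cons_eq_cons] at hB hB'
    rw [← hB.1] at hB'
    exact Bool.noConfusion hB'.1

lemma not_c2_c3 (w u : List Bool) : c2 w u → c3 w u → False := by
  rintro ⟨A, rfl, rfl⟩ ⟨B, B', hB, hB'⟩
  have h1 := congrArg List.getLast? hB
  have h2 := congrArg List.getLast? hB'
  rw [List.getLast?_concat] at h1 h2
  rw [List.getLast?_append_of_ne_nil _ (List.cons_ne_nil _ _)] at h1 h2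
  cases B' with
  | nil => simp at h2
  | cons c B'' =>
    rw [List.getLast?_cons_cons, List.getLast?_cons_cons] at h1 h2
    rw [← h1] at h2
    simp at h2

lemma rate_eq (w u : List Bool) :
    rate 1 1 w u = (if c1 w u then (1:ℝ) else 0) + (if c2 w u then 1 else 0) +
      (if c3 w u then 1 else 0) := by
  by_cases h1 : c1 w u <;> by_cases h2 : c2 w u <;> by_cases h3 : c3 w u
  all_goals try exact absurd h2 (not_c1_c2 w u h1)
  all_goals try exact absurd h3 (not_c1_c3 w u h1)
  all_goals try exact absurd h3 (not_c2_c3 w u h2)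
  all_goals simp only [c1, c2, c3] at h1 h2 h3
  all_goals simp [rate, c1, c2, c3, h1, h2, h3]

lemma sum_ofFn_eq_ite (n : ℕ) (v : List Bool) (hv : v.length = n) :
    (∑ u : Fin n → Bool, if List.ofFn u = v then (1:ℝ) else 0) = 1 := by
  have hg : List.ofFn (fun i : Fin n => v.get (Fin.cast hv.symm i)) = v := by
    apply List.ext_getElem
    · simp [hv]
    · intro i h1 h2
      simp [List.getElem_ofFn]
  rw [Finset.sum_eq_single (fun i : Fin n => v.get (Fin.cast hv.symm i))]
  · rw [if_pos hg]
  · intro u _ hu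
    rw [if_neg]
    intro h
    exact hu (List.ofFn_injective (h.trans hg.symm))
  · intro h; exact absurd (Finset.mem_univ _) h

lemma sum_c1 (n : ℕ) (w : List Bool) (hw : w.length = n) :
    (∑ u : Fin n → Bool, if c1 w (List.ofFn u) then (1:ℝ) else 0)
      = if w.head? = some false then 1 else 0 := by
  rcases w with _ | ⟨b, t⟩
  · have : ∀ u : Fin n → Bool, ¬ c1 [] (List.ofFn u) := by
      rintro u ⟨A, hA, -⟩; simp at hA
    simp [this]
  cases b
  · have hiff : ∀ u : List Bool, c1 (false :: t) u ↔ u = true :: t := by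
      intro u
      constructor
      · rintro ⟨A, hA, rfl⟩
        rw [List.cons_eq_cons] at hA
        rw [hA.2]
      · rintro rfl; exact ⟨t, rfl, rfl⟩
    simp only [hiff]
    rw [sum_ofFn_eq_ite n (true :: t) (by simpa using hw)]
    simp
  · have : ∀ u : Fin n → Bool, ¬ c1 (true :: t) (List.ofFn u) := by
      rintro u ⟨A, hA, -⟩
      rw [List.cons_eq_cons] at hA
      exact Bool.noConfusion hA.1
    simp [this]

lemma sum_c2 (n : ℕ) (w : List Bool) (hw : w.length = n) :
    (∑ u : Fin n → Bool, if c2 w (List.ofFn u) then (1:ℝ) else 0)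
      = if w.getLast? = some true then 1 else 0 := by
  by_cases hl : w.getLast? = some true
  · have hne : w ≠ [] := by rintro rfl; simp at hl
    have hlast : w.getLast hne = true := by
      rw [List.getLast?_eq_getLast hne] at hl
      exact Option.some_inj.mp hl
    have hwd : w = w.dropLast ++ [true] := by
      conv_lhs => rw [← List.dropLast_append_getLast hne]
      rw [hlast]
    have hiff : ∀ u : List Bool, c2 w u ↔ u = w.dropLast ++ [false] := by
      intro u
      constructor
      · rintro ⟨A, hA, rfl⟩
        have : A = w.dropLast := by rw [hA, List.dropLast_concat]
        rw [this]
      · rintro rfl; exact ⟨w.dropLast, hwd, rfl⟩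
    simp only [hiff]
    rw [sum_ofFn_eq_ite n _ ?_]
    · simp [hl]
    · have h1 : w.length = w.dropLast.length + 1 := by
        conv_lhs => rw [hwd]
        simp
      simp only [List.length_append, List.length_cons, List.length_nil]
      omega
  · have : ∀ u : Fin n → Bool, ¬ c2 w (List.ofFn u) := by
      rintro u ⟨A, hA, -⟩
      rw [hA, List.getLast?_concat] at hl
      exact hl rfl
    simp [this, hl]

def validP (w : List Bool) (i : ℕ) : Prop :=
  w.getD i false = true ∧ w.getD (i+1) true = false

instance (w : List Bool) (i : ℕ) : Decidable (validP w i) := by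
  unfold validP; infer_instance

def swp (w : List Bool) (i : ℕ) : List Bool :=
  w.take i ++ false :: true :: w.drop (i+2)

lemma c3_iff (w u : List Bool) :
    c3 w u ↔ ∃ i ∈ Finset.range (w.length - 1), validP w i ∧ u = swp w i := by
  constructor
  · rintro ⟨A, A', rfl, rfl⟩
    refine ⟨A.length, ?_, ⟨?_, ?_⟩, ?_⟩
    · simp only [Finset.mem_range, List.length_append, List.length_cons]
      omega
    · rw [List.getD_append_right _ _ _ _ le_rfl]
      simp
    · rw [List.getD_append_right _ _ _ _ (by omega)]
      simp [Nat.add_sub_cancel_left]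
    · unfold swp
      rw [List.take_left]
      congr 2
      have : A ++ true :: false :: A' = (A ++ [true, false]) ++ A' := by
        simp
      rw [this]
      have hlen : A.length + 2 = (A ++ [true, false]).length := by simp
      rw [hlen, List.drop_left]
  · rintro ⟨i, hi, ⟨h1, h2⟩, rfl⟩
    rw [Finset.mem_range] at hi
    have hi1 : i < w.length := by omega
    have hi2 : i + 1 < w.length := by omega
    refine ⟨w.take i, w.drop (i+2), ?_, rfl⟩
    conv_lhs => rw [← List.take_append_drop i w]
    congr 1
    rw [List.drop_eq_getElem_cons hi1, List.drop_eq_getElem_cons hi2]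
    rw [List.getD_eq_getElem w false hi1] at h1
    rw [List.getD_eq_getElem w true hi2] at h2
    rw [h1, h2]

lemma swp_ne_aux (w : List Bool) (i j : ℕ) (hij : i < j) (hj : j < w.length)
    (hvi : validP w i) : swp w i ≠ swp w j := by
  intro h
  have h1 : (swp w i).getD i false = false := by
    unfold swp
    rw [List.getD_append_right _ _ _ _ (by simp)]
    simp [List.length_take]
    rw [Nat.min_eq_left (by omega), Nat.sub_self]
    rfl
  have h2 : (swp w j).getD i false = w.getD i false := by
    unfold swp
    rw [List.getD_append _ _ _ _ (by simp; omega)]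
    have : i < (w.take j).length := by simp; omega
    rw [List.getD_eq_getElem _ _ this, List.getElem_take,
      List.getD_eq_getElem w false (by omega)]
  rw [h, h2, hvi.1] at h1
  exact Bool.noConfusion h1

lemma swp_ne (w : List Bool) (i j : ℕ) (hi : i < w.length) (hj : j < w.length)
    (hvi : validP w i) (hvj : validP w j) (hij : i ≠ j) : swp w i ≠ swp w j := by
  rcases lt_or_gt_of_ne hij with h | h
  · exact swp_ne_aux w i j h hj hvi
  · exact fun he => swp_ne_aux w j i h hi hvj he.symm

lemma zipcount (w : List Bool) :
    (∑ i ∈ Finset.range (w.length - 1), if validP w i then (1:ℝ) else 0)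
      = (((w.zip w.tail).count (true, false) : ℕ) : ℝ) := by
  induction w with
  | nil => simp
  | cons a t ih =>
    cases t with
    | nil => simp [validP]
    | cons b t' =>
      have hlen : (a :: b :: t').length - 1 = t'.length + 1 := by simp
      rw [hlen, Finset.sum_range_succ']
      have hshift : ∀ i : ℕ, validP (a :: b :: t') (i+1) ↔ validP (b :: t') i := by
        intro i; unfold validP; simp
      have hlen2 : (b :: t').length - 1 = t'.length := by simp
      simp only [hshift]
      rw [← hlen2, ih]
      have h0 : validP (a :: b :: t') 0 ↔ (a = true ∧ b = false) := by
        unfold validP; simp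
      simp only [List.zip_cons_cons, List.tail_cons, List.count_cons]
      by_cases hab : a = true ∧ b = false
      · rw [if_pos (h0.mpr hab)]
        have : ((a, b) = (true, false)) = True := by simp [hab.1, hab.2]
        simp [this]
        try push_cast
        try ring
      · rw [if_neg (fun h => hab (h0.mp h))]
        have : ¬ ((a, b) = (true, false)) := by
          simp only [Prod.mk.injEq]; tauto
        simp [this]

lemma sum_c3 (n : ℕ) (w : List Bool) (hw : w.length = n) :
    (∑ u : Fin n → Bool, if c3 w (List.ofFn u) then (1:ℝ) else 0)
      = (((w.zip w.tail).count (true, false) : ℕ) : ℝ) := by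
  have step1 : ∀ u : Fin n → Bool, (if c3 w (List.ofFn u) then (1:ℝ) else 0)
      = ∑ i ∈ Finset.range (n-1),
          if validP w i ∧ List.ofFn u = swp w i then (1:ℝ) else 0 := by
    intro u
    by_cases h : c3 w (List.ofFn u)
    · rw [if_pos h]
      obtain ⟨i0, hi0, hv0, hu0⟩ := (c3_iff w _).mp h
      rw [Finset.mem_range, hw] at hi0
      rw [Finset.sum_eq_single i0]
      · rw [if_pos ⟨hv0, hu0⟩]
      · intro j hj hne
        rw [Finset.mem_range] at hj
        rw [if_neg]
        rintro ⟨hvj, huj⟩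
        exact swp_ne w j i0 (by omega) (by omega) hvj hv0 hne (huj ▸ hu0 ▸ rfl)
      · intro h'
        exact absurd (Finset.mem_range.mpr hi0) h'
    · rw [if_neg h]
      symm
      apply Finset.sum_eq_zero
      intro i hi
      rw [if_neg]
      rintro ⟨hv, hu⟩
      rw [Finset.mem_range] at hi
      exact h ((c3_iff w _).mpr ⟨i, Finset.mem_range.mpr (by omega), hv, hu⟩)
  rw [Finset.sum_congr rfl (fun u _ => step1 u), Finset.sum_comm]
  have step2 : ∀ i ∈ Finset.range (n-1),
      (∑ u : Fin n → Bool, if validP w i ∧ List.ofFn u = swp w i then (1:ℝ) else 0)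
        = if validP w i then 1 else 0 := by
    intro i hi
    rw [Finset.mem_range] at hi
    by_cases hv : validP w i
    · rw [if_pos hv]
      have hand : ∀ u : Fin n → Bool,
          (validP w i ∧ List.ofFn u = swp w i) ↔ (List.ofFn u = swp w i) :=
        fun u => and_iff_right hv
      simp only [hand]
      apply sum_ofFn_eq_ite n (swp w i)
      unfold swp
      simp only [List.length_append, List.length_take, List.length_cons,
        List.length_drop]
      omega
    · simp [hv]
  rw [Finset.sum_congr rfl step2, ← hw, zipcount]

theorem part2 (n : ℕ) (C : Fin n → Bool) :
    (activeCount (List.ofFn C) : ℝ)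
      = ∑ C' : Fin n → Bool, rate 1 1 (List.ofFn C) (List.ofFn C') := by
  have hw : (List.ofFn C).length = n := List.length_ofFn
  calc (activeCount (List.ofFn C) : ℝ)
      = (if (List.ofFn C).head? = some false then (1:ℝ) else 0)
        + ((((List.ofFn C).zip (List.ofFn C).tail).count (true, false) : ℕ) : ℝ)
        + (if (List.ofFn C).getLast? = some true then (1:ℝ) else 0) := by
        unfold activeCount
        push_cast
        split_ifs <;> norm_num
    _ = ∑ C' : Fin n → Bool, rate 1 1 (List.ofFn C) (List.ofFn C') := by
        rw [← sum_c1 n _ hw, ← sum_c2 n _ hw, ← sum_c3 n _ hw, ← Finset.sum_add_distrib,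
          ← Finset.sum_add_distrib]
        apply Finset.sum_congr rfl
        intro u _
        rw [rate_eq]
        ring

theorem part1 (n : ℕ) (hn : 1 ≤ n) (C : Fin n → Bool) :
    Nat.card {M : MTree // M.forget.numLeaves = n + 2 ∧ M.forget.red = List.ofFn C}
      = Nat.card {T : PTree // T.numLeaves = n + 2 ∧ T.red = List.ofFn C}
          * activeCount (List.ofFn C) := by
  classical
  set w := List.ofFn C with hw
  haveI instT : Fintype {T : PTree // T.numLeaves = n + 2 ∧ T.red = w} :=
    Fintype.ofFinset ((allTrees (n+2)).toFinset.filter (fun T => T.red = w))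
      (by intro T; simp only [Finset.mem_filter, List.mem_toFinset, mem_allTrees]; exact Iff.rfl)
  haveI instM : Fintype {M : MTree // M.forget.numLeaves = n + 2 ∧ M.forget.red = w} :=
    Fintype.ofFinset (((allTrees (n+2)).flatMap markings).toFinset.filter
        (fun M => M.forget.numLeaves = n + 2 ∧ M.forget.red = w))
      (by
        intro M
        simp only [Finset.mem_filter, List.mem_toFinset, List.mem_flatMap]
        constructor
        · exact fun h => h.2
        · intro h
          exact ⟨⟨M.forget, (mem_allTrees _ _).mpr h.1, (mem_markings M _).mpr rfl⟩, h⟩)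
  set g : {M : MTree // M.forget.numLeaves = n + 2 ∧ M.forget.red = w}
      → {T : PTree // T.numLeaves = n + 2 ∧ T.red = w} :=
    fun M => ⟨M.1.forget, M.2⟩ with hg
  rw [Nat.card_eq_fintype_card, Nat.card_eq_fintype_card]
  rw [← Fintype.card_congr (Equiv.sigmaFiberEquiv g)]
  rw [Fintype.card_sigma]
  have hfib : ∀ T : {T : PTree // T.numLeaves = n + 2 ∧ T.red = w},
      Fintype.card {M' // g M' = T} = activeCount w := by
    intro T
    have e : {M' // g M' = T} ≃ {M : MTree // M.forget = T.1} :=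
      { toFun := fun x => ⟨x.1.1, congrArg Subtype.val x.2⟩
        invFun := fun y =>
          ⟨⟨y.1, by rw [show y.1.forget = T.1 from y.2]; exact T.2⟩, Subtype.ext y.2⟩
        left_inv := fun x => Subtype.ext (Subtype.ext rfl)
        right_inv := fun y => rfl }
    have e2 : {M : MTree // M.forget = T.1} ≃ {M // M ∈ (markings T.1).toFinset} :=
      Equiv.subtypeEquivRight (by intro M; simp [List.mem_toFinset, mem_markings])
    rw [← Nat.card_eq_fintype_card, Nat.card_congr e, Nat.card_congr e2,
      Nat.card_eq_fintype_card, Fintype.card_coe,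
      List.toFinset_card_of_nodup (markings_nodup T.1), markings_length,
      PTree.lbCount_eq_activeCount T.1 (by rw [T.2.1]; omega), T.2.2]
  rw [Finset.sum_congr rfl (fun T _ => hfib T)]
  rw [Finset.sum_const, smul_eq_mul]
  rfl

/-- `|(R∘f)^{-1}{C}| = |R^{-1}{C}| ·` (number of active bonds of `C`),
and for `α = β = 1` the number of active bonds equals `Σ_{C'} W(C → C')`. -/
theorem marked_fiber_card (n : ℕ) (hn : 1 ≤ n) (C : Fin n → Bool) :
    Nat.card {M : MTree // M.forget.numLeaves = n + 2 ∧ M.forget.red = List.ofFn C}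
        = Nat.card {T : PTree // T.numLeaves = n + 2 ∧ T.red = List.ofFn C} *
            activeCount (List.ofFn C) ∧
    (activeCount (List.ofFn C) : ℝ)
        = ∑ C' : Fin n → Bool, rate 1 1 (List.ofFn C) (List.ofFn C') := by
  constructor
  · exact part1 n hn C
  · exact part2 n C
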